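/- If q ≡ 3 (mod 4) and C ⊆ F_q^n is a self-dual linear code, then n is divisible by 4. -/

import Mathlib

open Matrix BigOperators

/-- The dual of a block code under the standard dot product. -/
def dualSet {n : ℕ} {F : Type*} [Field F] (C : Submodule F (Fin n → F)) : Set (Fin n → F) :=
  {y | ∀ x ∈ C, x ⬝ᵥ y = 0}

section aux

variable {F : Type*} [Field F]

/-- The dot-product bilinear form on `Fin n → F`. -/
noncomputable def dotBilin (n : ℕ) (F : Type*) [Field F] :
    LinearMap.BilinForm F (Fin n → F) :=
  LinearMap.mk₂ F (· ⬝ᵥ ·)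
    (fun x y z => add_dotProduct x y z)
    (fun c x y => smul_dotProduct c x y)
    (fun x y z => dotProduct_add x y z)
    (fun c x y => dotProduct_smul c x y)

@[simp] lemma dotBilin_apply {n : ℕ} (x y : Fin n → F) :
    dotBilin n F x y = x ⬝ᵥ y := rfl

lemma dotBilin_symm (n : ℕ) : (dotBilin n F).IsSymm := by
  refine ⟨fun x y => ?_⟩
  simp [dotProduct_comm]

lemma dotBilin_refl (n : ℕ) : (dotBilin n F).IsRefl :=
  (dotBilin_symm n).isRefl

lemma dotBilin_nondegenerate (n : ℕ) : (dotBilin n F).Nondegenerate := by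
  refine (LinearMap.IsRefl.nondegenerate_iff_separatingLeft (dotBilin_refl (F := F) n)).mpr ?_
  intro x hx
  funext i
  have := hx (Pi.single i 1)
  simpa [dotProduct_single] using this

end aux

/-- If `q ≡ 3 (mod 4)` and a self-dual code of length `n` exists over `F_q`,
then `4 ∣ n`. -/
theorem four_dvd_length_of_selfDual {n : ℕ} {F : Type*} [Field F] [Fintype F]
    (hq : Fintype.card F % 4 = 3) (C : Submodule F (Fin n → F))
    (hC : (C : Set (Fin n → F)) = dualSet C) :
    4 ∣ n := by
  classical
  set B := dotBilin n F with hB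
  -- C is the orthogonal of itself
  have horth : C = B.orthogonal C := by
    ext y
    constructor
    · intro hy x hx
      have : y ∈ dualSet C := hC ▸ hy
      exact this x hx
    · intro hy
      have : y ∈ dualSet C := fun x hx => hy x hx
      rw [← SetLike.mem_coe, hC]
      exact this
  set k := Module.finrank F C with hk
  have hn2 : k + k = n := by
    have h := LinearMap.BilinForm.finrank_add_finrank_orthogonal (B := B)
      (dotBilin_refl n) C
    rw [B.orthogonal_top_eq_bot (dotBilin_nondegenerate n), inf_bot_eq,
      ← horth] at h
    simp [Module.finrank_pi] at h
    omega
  -- complement and bases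
  obtain ⟨W, hW⟩ := Submodule.exists_isCompl C
  have hkW : Module.finrank F W = k := by
    have := Submodule.finrank_add_eq_of_isCompl hW
    simp [Module.finrank_pi] at this
    omega
  let bC : Module.Basis (Fin k) F C := Module.finBasisOfFinrankEq F C rfl
  let bW : Module.Basis (Fin k) F W := Module.finBasisOfFinrankEq F W hkW
  let bas : Module.Basis (Fin k ⊕ Fin k) F (Fin n → F) :=
    (bC.prod bW).map (Submodule.prodEquivOfIsCompl C W hW)
  have hbasC : ∀ i, bas (Sum.inl i) ∈ C := by
    intro i
    have : bas (Sum.inl i) = ((bC i : Fin n → F), (0 : Fin n → F)).1 + 0 := by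
      simp [bas, Module.Basis.prod_apply, Submodule.coe_prodEquivOfIsCompl']
    simp only [bas, Module.Basis.map_apply, Submodule.coe_prodEquivOfIsCompl']
    simp [Module.Basis.prod_apply]
  -- index equivalence
  let e : (Fin k ⊕ Fin k) ≃ Fin n := finSumFinEquiv.trans (finCongr hn2)
  -- Gram matrix and change-of-basis matrix
  let P : Matrix (Fin k ⊕ Fin k) (Fin k ⊕ Fin k) F := fun i j => bas i (e j)
  let G : Matrix (Fin k ⊕ Fin k) (Fin k ⊕ Fin k) F := fun i j => bas i ⬝ᵥ bas j
  have hG : G = P * Pᵀ := by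
    ext i j
    simp only [G, P, Matrix.mul_apply, Matrix.transpose_apply, dotProduct]
    exact (Equiv.sum_comp e fun l => bas i l * bas j l).symm
  -- P is invertible
  let b0 : Module.Basis (Fin k ⊕ Fin k) F (Fin n → F) := (Pi.basisFun F (Fin n)).reindex e.symm
  have hPt : Pᵀ = b0.toMatrix bas := by
    ext i j
    simp [P, b0, Module.Basis.toMatrix_apply]
    rfl
  have hPdet : P.det ≠ 0 := by
    have : Invertible (b0.toMatrix bas) := b0.invertibleToMatrix bas
    have h1 : IsUnit (b0.toMatrix bas).det := @isUnit_det_of_invertible _ _ _ _ _ (b0.toMatrix bas) this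
    have h2 : Pᵀ.det ≠ 0 := by rw [hPt]; exact h1.ne_zero
    simpa [Matrix.det_transpose] using h2
  -- block structure
  let A : Matrix (Fin k) (Fin k) F := G.toBlocks₁₂
  let D : Matrix (Fin k) (Fin k) F := G.toBlocks₂₂
  have hGblocks : G = Matrix.fromBlocks 0 A Aᵀ D := by
    have h11 : G.toBlocks₁₁ = 0 := by
      ext i j
      have h1 : bas (Sum.inl j) ∈ dualSet C := by rw [← hC]; exact SetLike.mem_coe.mpr (hbasC j)
      exact h1 _ (hbasC i)
    have h21 : G.toBlocks₂₁ = Aᵀ := by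
      ext i j
      simp only [Matrix.toBlocks₂₁, Matrix.transpose_apply, Matrix.toBlocks₁₂, A,
        Matrix.of_apply, G]
      exact dotProduct_comm _ _
    conv_lhs => rw [← Matrix.fromBlocks_toBlocks G, h11, h21]
  -- determinant computation
  have hdetG : G.det = (-1) ^ k * A.det ^ 2 := by
    have hfact : Matrix.fromBlocks (0 : Matrix (Fin k) (Fin k) F) A Aᵀ D =
        Matrix.fromBlocks 1 1 0 1 * Matrix.fromBlocks 1 0 (-1) 1 *
          Matrix.fromBlocks 1 1 0 1 * Matrix.fromBlocks (-1) 0 0 1 *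
          Matrix.fromBlocks Aᵀ D 0 A := by
      simp only [Matrix.fromBlocks_multiply]
      norm_num
    rw [hGblocks, hfact]
    simp only [Matrix.det_mul, Matrix.det_fromBlocks_zero₂₁, Matrix.det_fromBlocks_zero₁₂]
    simp [Matrix.det_neg, Matrix.det_transpose, sq, mul_comm, mul_assoc]
  have hdetG' : G.det = P.det ^ 2 := by
    rw [hG, Matrix.det_mul, Matrix.det_transpose, sq]
  have hAdet : A.det ≠ 0 := by
    intro h
    have hz : P.det ^ 2 = 0 := by rw [← hdetG', hdetG, h]; ring
    exact hPdet (by simpa using sq_eq_zero_iff.mp hz)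
  -- (-1)^k is a square
  have hsq : IsSquare ((-1 : F) ^ k) := by
    have key : ((-1 : F) ^ k) = (P.det / A.det) ^ 2 := by
      rw [div_pow, ← hdetG', hdetG, mul_div_assoc, div_self (pow_ne_zero 2 hAdet), mul_one]
    exact ⟨P.det / A.det, by rw [key, sq]⟩
  have hkeven : Even k := by
    by_contra hodd
    rw [Nat.not_even_iff_odd] at hodd
    rw [hodd.neg_one_pow] at hsq
    exact (FiniteField.isSquare_neg_one_iff.mp hsq) hq
  obtain ⟨m, hm⟩ := hkeven
  exact ⟨m, by omega⟩
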